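/- Let d ≥ 1, let Y be a finite nonempty type, let h : ℝ^d → Y be measurable, and let σ > 0. For v ∈ ℝ^d and c ∈ Y define H_c(v) = N(v, σ²I){u ∈ ℝ^d : h(u) = c}. Let w, w' ∈ ℝ^d, c_A ∈ Y, and p_A, p_B ∈ [0,1] with p_B ≤ p_A, and suppose H_{c_A}(w') ≥ p_A and H_c(w') ≤ p_B for every c ≠ c_A. If ‖w − w'‖² ≤ −2σ² · log(1 − (√p_A − √p_B)²), then for every c ≠ c_A, H_{c_A}(w) ≥ H_c(w); that is, the Gaussian-parameter-smoothed classifier gives the same top prediction c_A at parameters w as at parameters w'. -/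

import Mathlib

open MeasureTheory ProbabilityTheory Real
open scoped Classical RealInnerProductSpace BigOperators

/-- KL divergence: `∫ log(dμ/dν) dμ` if `μ ≪ ν`, else `⊤`. -/
noncomputable def klDiv {Ω : Type*} [MeasurableSpace Ω] (μ ν : Measure Ω) : EReal :=
  if μ ≪ ν then ((∫ x, Real.log ((μ.rnDeriv ν x).toReal) ∂μ : ℝ) : EReal) else ⊤

/-- Total variation distance between measures. -/
noncomputable def tvDist {Ω : Type*} [MeasurableSpace Ω] (μ ν : Measure Ω) : ℝ :=
  ⨆ A : {s : Set Ω // MeasurableSet s}, |(μ A.1).toReal - (ν A.1).toReal|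

/-- Isotropic Gaussian `N(m, σ²I)` on `ℝ^d` (as `EuclideanSpace ℝ (Fin d)`):
the product of coordinatewise real Gaussians with means `m i` and variance `σ²`. -/
noncomputable def gaussianPi {d : ℕ} (m : EuclideanSpace ℝ (Fin d)) (σ : ℝ) :
    Measure (EuclideanSpace ℝ (Fin d)) :=
  (Measure.pi fun i => gaussianReal (m i) ⟨σ ^ 2, sq_nonneg σ⟩).map
    (MeasurableEquiv.toLp 2 (Fin d → ℝ))

/-- Standard Gaussian cumulative distribution function `Φ`. -/
noncomputable def stdGaussCDF (x : ℝ) : ℝ := cdf (gaussianReal 0 1) x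

/-- Clipping map `Clip_ρ(w) = w / max(1, ‖w‖/ρ)`. -/
noncomputable def clip {H : Type*} [NormedAddCommGroup H] [NormedSpace ℝ H] (ρ : ℝ) (w : H) : H :=
  (max 1 (‖w‖ / ρ))⁻¹ • w

open scoped ENNReal NNReal

instance gaussSqInst (m σ : ℝ) : IsProbabilityMeasure (gaussianReal m ⟨σ ^ 2, sq_nonneg σ⟩) :=
  instIsProbabilityMeasureGaussianReal m _

private lemma lintegral_pi_prod : ∀ (n : ℕ) (μ : Fin n → Measure ℝ),
    (∀ i, SigmaFinite (μ i)) →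
    ∀ (f : Fin n → ℝ → ℝ≥0∞), (∀ i, Measurable (f i)) →
    ∫⁻ x, ∏ i, f i (x i) ∂Measure.pi μ = ∏ i, ∫⁻ t, f i t ∂μ i := by
  intro n
  induction n with
  | zero =>
    intro μ hσ f hf
    haveI := hσ
    simp [Measure.pi_univ]
  | succ n ih =>
    intro μ hσ f hf
    haveI := hσ
    have hFm : Measurable fun x : Fin (n+1) → ℝ => ∏ i, f i (x i) :=
      Finset.measurable_prod _ fun i _ => (hf i).comp (measurable_pi_apply i)
    rw [← ((measurePreserving_piFinSuccAbove μ 0).symm (MeasurableEquiv.piFinSuccAbove (fun _ => ℝ) 0)).lintegral_comp hFm]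
    simp_rw [MeasurableEquiv.piFinSuccAbove_symm_apply, Fin.insertNthEquiv,
      Fin.prod_univ_succ, Fin.insertNth_zero, Equiv.coe_fn_mk, Fin.cons_zero, Fin.cons_succ,
      Fin.zero_succAbove, cast_eq]
    haveI : ∀ j : Fin n, SigmaFinite (μ j.succ) := fun j => hσ _
    refine (lintegral_prod_mul (f := f 0) (g := fun v : Fin n → ℝ => ∏ x : Fin n, f x.succ (v x))
      ((hf 0).aemeasurable)
      ((Finset.measurable_prod _ fun i _ => (hf i.succ).comp (measurable_pi_apply i)).aemeasurable)).trans ?_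
    rw [ih (fun j => μ j.succ) (fun j => hσ _) (fun j => f j.succ) (fun j => hf _)]

private lemma pi_map_eval {n : ℕ} (μ : Fin n → Measure ℝ) [∀ i, IsProbabilityMeasure (μ i)]
    (i : Fin n) : (Measure.pi μ).map (Function.eval i) = μ i := by
  ext s hs
  rw [Measure.map_apply (measurable_pi_apply i) hs, Set.eval_preimage, Measure.pi_pi]
  rw [Finset.prod_eq_single i (fun j _ hj => by simp [Function.update_of_ne hj])
    (fun hi => absurd (Finset.mem_univ i) hi)]
  simp

private lemma gauss_shift {σ : ℝ} (hσ : 0 < σ) (a b : ℝ) :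
    gaussianReal a ⟨σ^2, sq_nonneg σ⟩ = (gaussianReal b ⟨σ^2, sq_nonneg σ⟩).withDensity
      (fun x => ENNReal.ofReal (Real.exp ((x-b)^2/(2*σ^2) - (x-a)^2/(2*σ^2)))) := by
  set v : ℝ≥0 := ⟨σ^2, sq_nonneg σ⟩ with hvdef
  have hv : (v : ℝ) = σ^2 := rfl
  have hV : v ≠ 0 := by
    intro hc
    exact pow_ne_zero 2 hσ.ne' (by rw [← hv, hc]; rfl)
  rw [gaussianReal_of_var_ne_zero a hV, gaussianReal_of_var_ne_zero b hV,
    ← withDensity_mul _ (measurable_gaussianPDF _ _)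
      (by exact (measurable_exp.comp (by fun_prop)).ennreal_ofReal)]
  congr 1
  funext x
  simp only [Pi.mul_apply, gaussianPDF, gaussianPDFReal_def, hv]
  rw [← ENNReal.ofReal_mul (by positivity)]
  congr 1
  conv_rhs => rw [mul_assoc, ← Real.exp_add]
  congr 2
  ring

private lemma integrable_pdf_mul_id {σ : ℝ} (hσ : 0 < σ) (m : ℝ) :
    Integrable (fun x => gaussianPDFReal m ⟨σ^2, sq_nonneg σ⟩ x * x) := by
  set v : ℝ≥0 := ⟨σ^2, sq_nonneg σ⟩ with hvdef
  have hv : (v : ℝ) = σ^2 := rfl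
  have hb : (0:ℝ) < 1/(2*σ^2) := by positivity
  have h3 := (integrable_mul_exp_neg_mul_sq hb).comp_sub_right m
  have h4 := (integrable_exp_neg_mul_sq hb).comp_sub_right m
  have heq : (fun x => gaussianPDFReal m v x * x)
      = fun x => (√(2*π*σ^2))⁻¹ * ((x - m) * rexp (-(1/(2*σ^2))*(x-m)^2)
          + m * rexp (-(1/(2*σ^2))*(x-m)^2)) := by
    funext x
    have hexp : -(x-m)^2/(2*σ^2) = -(1/(2*σ^2))*(x-m)^2 := by
      field_simp
    simp only [gaussianPDFReal_def, hv, hexp]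
    ring
  rw [heq]
  exact ((h3.add (h4.const_mul m)).const_mul _)

private lemma integrable_id_gauss {σ : ℝ} (hσ : 0 < σ) (m : ℝ) :
    Integrable (fun x => x) (gaussianReal m ⟨σ^2, sq_nonneg σ⟩) := by
  set v : ℝ≥0 := ⟨σ^2, sq_nonneg σ⟩ with hvdef
  have hv : (v : ℝ) = σ^2 := rfl
  have hV : v ≠ 0 := by
    intro hc
    exact pow_ne_zero 2 hσ.ne' (by rw [← hv, hc]; rfl)
  rw [gaussianReal_of_var_ne_zero m hV]
  have : gaussianPDF m v
      = fun x => (((gaussianPDFReal m v x).toNNReal : ℝ≥0) : ℝ≥0∞) := rfl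
  rw [this, integrable_withDensity_iff_integrable_smul₀
    ((measurable_gaussianPDFReal m _).real_toNNReal.aemeasurable)]
  have : (fun x : ℝ => ((gaussianPDFReal m v x).toNNReal : ℝ≥0) • x)
      = fun x => gaussianPDFReal m v x * x := by
    funext x
    simp [NNReal.smul_def, Real.coe_toNNReal _ (gaussianPDFReal_nonneg m _ x)]
  rw [this]
  exact integrable_pdf_mul_id hσ m

private lemma integral_id_gauss {σ : ℝ} (hσ : 0 < σ) (m : ℝ) :
    ∫ x, x ∂(gaussianReal m ⟨σ^2, sq_nonneg σ⟩) = m := by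
  set v : ℝ≥0 := ⟨σ^2, sq_nonneg σ⟩ with hvdef
  have hv : (v : ℝ) = σ^2 := rfl
  have hV : v ≠ 0 := by
    intro hc
    exact pow_ne_zero 2 hσ.ne' (by rw [← hv, hc]; rfl)
  rw [gaussianReal_of_var_ne_zero m hV]
  have h1 : gaussianPDF m v
      = fun x => (((gaussianPDFReal m v x).toNNReal : ℝ≥0) : ℝ≥0∞) := rfl
  rw [h1, integral_withDensity_eq_integral_smul
    ((measurable_gaussianPDFReal m _).real_toNNReal) _]
  have h2 : (fun x : ℝ => ((gaussianPDFReal m v x).toNNReal : ℝ≥0) • x)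
      = fun x => gaussianPDFReal m v x * x := by
    funext x
    simp [NNReal.smul_def, Real.coe_toNNReal _ (gaussianPDFReal_nonneg m _ x)]
  rw [h2, ← integral_add_right_eq_self (fun x => gaussianPDFReal m v x * x) m]
  simp only [gaussianPDFReal_add, sub_self]
  have hodd : ∫ x : ℝ, gaussianPDFReal 0 v x * x = 0 := by
    have heven : ∀ y : ℝ, gaussianPDFReal 0 v (-y)
        = gaussianPDFReal 0 v y := by
      intro y
      simp only [gaussianPDFReal_def, hv]
      ring_nf
    have := integral_neg_eq_self (fun x => gaussianPDFReal 0 v x * x) volume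
    simp only [heven] at this
    have h' : ∫ x : ℝ, gaussianPDFReal 0 v x * (-x)
        = ∫ x : ℝ, gaussianPDFReal 0 v x * x := this
    simp only [mul_neg, integral_neg] at h'
    linarith
  have hsplit : (fun x : ℝ => gaussianPDFReal 0 v x * (x + m))
      = fun x => gaussianPDFReal 0 v x * x
          + m * gaussianPDFReal 0 v x := by
    funext x; ring
  rw [hsplit, integral_add (integrable_pdf_mul_id hσ 0)
    ((integrable_gaussianPDFReal 0 _).const_mul m), hodd, integral_const_mul,
    integral_gaussianPDFReal_eq_one 0 hV]
  ring

private lemma gibbs_bound {Ω : Type*} [MeasurableSpace Ω] (ν : Measure Ω) [IsProbabilityMeasure ν]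
    (ℓ : Ω → ℝ) (hℓm : Measurable ℓ)
    (μ : Measure Ω) [IsProbabilityMeasure μ]
    (hμ : μ = ν.withDensity fun x => ENNReal.ofReal (rexp (ℓ x)))
    (hℓint : Integrable ℓ μ)
    (A B : Set Ω) (hA : MeasurableSet A) (hB : MeasurableSet B) (hAB : Disjoint A B)
    (α β γ : ℝ) (hα : 0 < α) (hβ : 0 < β) (hγ : 0 < γ)
    (hsum : α * (ν A).toReal + β * (ν B).toReal + γ * (ν (A ∪ B)ᶜ).toReal = 1) :
    Real.log α * (μ A).toReal + Real.log β * (μ B).toReal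
      + Real.log γ * (μ (A ∪ B)ᶜ).toReal ≤ ∫ x, ℓ x ∂μ := by
  classical
  set C : Set Ω := (A ∪ B)ᶜ with hCdef
  have hC : MeasurableSet C := (hA.union hB).compl
  set g : Ω → ℝ := fun t => if t ∈ A then α else if t ∈ B then β else γ with hgdef
  have hgm : Measurable g := Measurable.ite hA measurable_const
    (Measurable.ite hB measurable_const measurable_const)
  have hgpos : ∀ t, 0 < g t := by
    intro t
    simp only [hgdef]
    split_ifs <;> assumption
  -- decomposition of any function of the form (if ∈A then u else if ∈B then v else r)
  have hdecomp : ∀ u v r : ℝ, (fun t => if t ∈ A then u else if t ∈ B then v else r)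
      = fun t => A.indicator (fun _ => u) t + B.indicator (fun _ => v) t
          + C.indicator (fun _ => r) t := by
    intro u v r
    funext t
    by_cases htA : t ∈ A
    · have htB : t ∉ B := fun hb => (hAB.le_bot ⟨htA, hb⟩).elim
      have htC : t ∉ C := fun hc => hc (Or.inl htA)
      simp [htA, htB, htC]
    · by_cases htB : t ∈ B
      · have htC : t ∉ C := fun hc => hc (Or.inr htB)
        simp [htA, htB, htC]
      · have htC : t ∈ C := fun hc => hc.elim htA htB
        simp [htA, htB, htC]
  have hint3 : ∀ (m : Measure Ω) (u v r : ℝ), IsProbabilityMeasure m →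
      Integrable (fun t => if t ∈ A then u else if t ∈ B then v else r) m := by
    intro m u v r hm
    rw [hdecomp]
    exact (((integrable_const u).indicator hA).add ((integrable_const v).indicator hB)).add
      ((integrable_const r).indicator hC)
  have hival : ∀ (m : Measure Ω) (u v r : ℝ), IsProbabilityMeasure m →
      ∫ t, (if t ∈ A then u else if t ∈ B then v else r) ∂m
        = u * (m A).toReal + v * (m B).toReal + r * (m C).toReal := by
    intro m u v r hm
    have i1 : Integrable (fun t => A.indicator (fun _ => u) t) m := (integrable_const u).indicator hA
    have i2 : Integrable (fun t => B.indicator (fun _ => v) t) m := (integrable_const v).indicator hB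
    have i3 : Integrable (fun t => C.indicator (fun _ => r) t) m := (integrable_const r).indicator hC
    have i12 : Integrable (fun t => A.indicator (fun _ => u) t + B.indicator (fun _ => v) t) m :=
      i1.add i2
    rw [hdecomp, integral_add i12 i3, integral_add i1 i2,
      integral_indicator_const u hA, integral_indicator_const v hB,
      integral_indicator_const r hC]
    simp [mul_comm]
    rfl
  -- the exponential-tilt identity
  have hf_meas : Measurable fun x => (rexp (ℓ x)).toNNReal :=
    (measurable_exp.comp hℓm).real_toNNReal
  have hdens : (fun x => ENNReal.ofReal (rexp (ℓ x)))
      = fun x => (((rexp (ℓ x)).toNNReal : ℝ≥0) : ℝ≥0∞) := rfl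
  have hcollapse : (fun x => ((rexp (ℓ x)).toNNReal : ℝ≥0) • (g x * rexp (-ℓ x))) = g := by
    funext x
    have : ((rexp (ℓ x)).toNNReal : ℝ) = rexp (ℓ x) := Real.coe_toNNReal _ (exp_nonneg _)
    simp only [NNReal.smul_def, this, Real.exp_neg]
    rw [smul_eq_mul]
    field_simp
  have hGexp_int : Integrable (fun t => g t * rexp (-ℓ t)) μ := by
    rw [hμ, hdens, integrable_withDensity_iff_integrable_smul₀ hf_meas.aemeasurable]
    rw [hcollapse]
    exact hint3 ν α β γ inferInstance
  have hGexp_val : ∫ t, g t * rexp (-ℓ t) ∂μ = 1 := by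
    rw [hμ, hdens, integral_withDensity_eq_integral_smul hf_meas _]
    rw [hcollapse]
    rw [show ∫ t, g t ∂ν = ∫ t, (if t ∈ A then α else if t ∈ B then β else γ) ∂ν from rfl,
      hival ν α β γ inferInstance]
    exact hsum
  have hlogg_int : Integrable (fun t => Real.log (g t)) μ := by
    have : (fun t => Real.log (g t))
        = fun t => if t ∈ A then Real.log α else if t ∈ B then Real.log β else Real.log γ := by
      funext t
      simp only [hgdef]
      split_ifs <;> rfl
    rw [this]
    exact hint3 μ _ _ _ inferInstance
  have hlogg_val : ∫ t, Real.log (g t) ∂μ = Real.log α * (μ A).toReal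
      + Real.log β * (μ B).toReal + Real.log γ * (μ C).toReal := by
    have : (fun t => Real.log (g t))
        = fun t => if t ∈ A then Real.log α else if t ∈ B then Real.log β else Real.log γ := by
      funext t
      simp only [hgdef]
      split_ifs <;> rfl
    rw [this, hival μ _ _ _ inferInstance]
  have hpt : ∀ t, Real.log (g t) ≤ ℓ t + (g t * rexp (-ℓ t) - 1) := by
    intro t
    have h0 : 0 < g t * rexp (-ℓ t) := mul_pos (hgpos t) (exp_pos _)
    have := Real.log_le_sub_one_of_pos h0
    rw [Real.log_mul (hgpos t).ne' (exp_pos _).ne', Real.log_exp] at this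
    linarith
  have hsub : Integrable (fun t => g t * rexp (-ℓ t) - 1) μ := hGexp_int.sub (integrable_const 1)
  have hadd : Integrable (fun t => ℓ t + (g t * rexp (-ℓ t) - 1)) μ := hℓint.add hsub
  have hle : ∫ t, Real.log (g t) ∂μ ≤ ∫ t, (ℓ t + (g t * rexp (-ℓ t) - 1)) ∂μ :=
    integral_mono hlogg_int hadd hpt
  rw [integral_add hℓint hsub, integral_sub hGexp_int (integrable_const 1), hGexp_val] at hle
  rw [hlogg_val] at hle
  simp only [integral_const, measure_univ, probReal_univ, smul_eq_mul, one_mul] at hle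
  linarith

noncomputable def Gpi {d : ℕ} (σ : ℝ) (m : EuclideanSpace ℝ (Fin d)) :
    Measure (Fin d → ℝ) :=
  Measure.pi fun i => gaussianReal (m i) ⟨σ ^ 2, sq_nonneg σ⟩

instance {d : ℕ} (σ : ℝ) (m : EuclideanSpace ℝ (Fin d)) :
    IsProbabilityMeasure (Gpi σ m) := by
  unfold Gpi; infer_instance

noncomputable def ℓpi {d : ℕ} (σ : ℝ) (w w' : EuclideanSpace ℝ (Fin d))
    (x : Fin d → ℝ) : ℝ :=
  ∑ i, ((x i - w' i)^2/(2*σ^2) - (x i - w i)^2/(2*σ^2))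

lemma ℓpi_meas {d : ℕ} (σ : ℝ) (w w' : EuclideanSpace ℝ (Fin d)) :
    Measurable (ℓpi σ w w') := by
  unfold ℓpi
  apply Finset.measurable_sum
  intro i _
  fun_prop

lemma Gpi_map {d : ℕ} {σ : ℝ} (m : EuclideanSpace ℝ (Fin d)) {S : Set (EuclideanSpace ℝ (Fin d))}
    (hS : MeasurableSet S) :
    gaussianPi m σ S = Gpi σ m ((MeasurableEquiv.toLp 2 (Fin d → ℝ)) ⁻¹' S) := by
  rw [gaussianPi, Measure.map_apply (MeasurableEquiv.toLp 2 (Fin d → ℝ)).measurable hS]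
  rfl

lemma Gpi_dens {d : ℕ} {σ : ℝ} (hσ : 0 < σ) (w w' : EuclideanSpace ℝ (Fin d)) :
    Gpi σ w = (Gpi σ w').withDensity (fun x => ENNReal.ofReal (rexp (ℓpi σ w w' x))) := by
  have hmdens : ∀ i : Fin d, Measurable fun t : ℝ =>
      ENNReal.ofReal (rexp ((t - w' i)^2/(2*σ^2) - (t - w i)^2/(2*σ^2))) := by
    intro i; fun_prop
  apply Measure.pi_eq
  intro s hs
  rw [withDensity_apply _ (MeasurableSet.univ_pi hs),
    ← lintegral_indicator (MeasurableSet.univ_pi hs)]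
  have hpt : ∀ x, (Set.univ.pi s).indicator (fun x => ENNReal.ofReal (rexp (ℓpi σ w w' x))) x
      = ∏ i, (s i).indicator
          (fun t => ENNReal.ofReal (rexp ((t - w' i)^2/(2*σ^2) - (t - w i)^2/(2*σ^2)))) (x i) := by
    intro x
    by_cases hx : x ∈ Set.univ.pi s
    · rw [Set.indicator_of_mem hx]
      have hxm : ∀ i, x i ∈ s i := fun i => hx i (Set.mem_univ i)
      rw [ℓpi, Real.exp_sum, ENNReal.ofReal_prod_of_nonneg (fun i _ => Real.exp_nonneg _)]
      exact Finset.prod_congr rfl fun i _ => (Set.indicator_of_mem (hxm i)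
        (fun t => ENNReal.ofReal (rexp ((t - w' i)^2/(2*σ^2) - (t - w i)^2/(2*σ^2))))).symm
    · rw [Set.indicator_of_notMem hx]
      have : ∃ i, x i ∉ s i := by
        by_contra hcon
        push_neg at hcon
        exact hx fun i _ => hcon i
      obtain ⟨i, hi⟩ := this
      exact (Finset.prod_eq_zero (Finset.mem_univ i) (Set.indicator_of_notMem hi _)).symm
  rw [lintegral_congr hpt, Gpi,
    lintegral_pi_prod d _ (fun i => inferInstance) _ (fun i => (hmdens i).indicator (hs i))]
  refine Finset.prod_congr rfl fun i _ => ?_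
  rw [lintegral_indicator (hs i), ← withDensity_apply _ (hs i), ← gauss_shift hσ (w i) (w' i)]

lemma Gpi_int {d : ℕ} {σ : ℝ} (hσ : 0 < σ) (w w' : EuclideanSpace ℝ (Fin d)) :
    Integrable (ℓpi σ w w') (Gpi σ w) ∧
    ∫ x, ℓpi σ w w' x ∂(Gpi σ w) = (∑ i, (w i - w' i)^2)/(2*σ^2) := by
  have hslin : ∀ i : Fin d, (fun t : ℝ => (t - w' i)^2/(2*σ^2) - (t - w i)^2/(2*σ^2))
      = fun t => ((w i - w' i)/σ^2) * t + ((w' i)^2 - (w i)^2)/(2*σ^2) := by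
    intro i
    funext t
    field_simp
    ring
  have hfm : ∀ i : Fin d, Measurable fun t : ℝ =>
      (t - w' i)^2/(2*σ^2) - (t - w i)^2/(2*σ^2) := by
    intro i; fun_prop
  have hfi_int : ∀ i : Fin d, Integrable (fun t : ℝ => (t - w' i)^2/(2*σ^2) - (t - w i)^2/(2*σ^2))
      (gaussianReal (w i) ⟨σ^2, sq_nonneg σ⟩) := by
    intro i
    rw [hslin i]
    exact ((integrable_id_gauss hσ (w i)).const_mul _).add (integrable_const _)
  have hfi_val : ∀ i : Fin d, ∫ t, ((t - w' i)^2/(2*σ^2) - (t - w i)^2/(2*σ^2))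
      ∂(gaussianReal (w i) ⟨σ^2, sq_nonneg σ⟩) = (w i - w' i)^2/(2*σ^2) := by
    intro i
    rw [hslin i, integral_add ((integrable_id_gauss hσ (w i)).const_mul _) (integrable_const _),
      integral_const_mul, integral_id_gauss hσ (w i), integral_const, probReal_univ]
    have harith : (w i - w' i)/σ^2 * (w i) + ((w' i)^2 - (w i)^2)/(2*σ^2)
        = (w i - w' i)^2/(2*σ^2) := by
      field_simp
      ring
    simpa using harith
  have hcomp_int : ∀ i : Fin d,
      Integrable (fun x : Fin d → ℝ => (x i - w' i)^2/(2*σ^2) - (x i - w i)^2/(2*σ^2))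
        (Gpi σ w) := by
    intro i
    have h1 : Integrable (fun t : ℝ => (t - w' i)^2/(2*σ^2) - (t - w i)^2/(2*σ^2))
        ((Gpi σ w).map (Function.eval i)) := by
      rw [Gpi, pi_map_eval]
      exact hfi_int i
    exact (integrable_map_measure ((hfm i).aestronglyMeasurable)
      (measurable_pi_apply i).aemeasurable).mp h1
  constructor
  · rw [show ℓpi σ w w' = fun x => ∑ i, ((x i - w' i)^2/(2*σ^2) - (x i - w i)^2/(2*σ^2)) from rfl]
    exact integrable_finset_sum _ fun i _ => hcomp_int i
  · rw [show ℓpi σ w w' = fun x => ∑ i, ((x i - w' i)^2/(2*σ^2) - (x i - w i)^2/(2*σ^2)) from rfl,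
      integral_finset_sum _ fun i _ => hcomp_int i, Finset.sum_div]
    refine Finset.sum_congr rfl fun i _ => ?_
    rw [← hfi_val i]
    have := integral_map (φ := Function.eval i) (μ := Gpi σ w)
      (measurable_pi_apply i).aemeasurable ((hfm i).aestronglyMeasurable
        (μ := (Gpi σ w).map (Function.eval i)))
    rw [Gpi, pi_map_eval] at this
    rw [← Gpi] at this
    exact this.symm

set_option maxHeartbeats 1000000 in
theorem smoothed_prediction_consistency_radius (d : ℕ) (hd : 1 ≤ d)
    (Y : Type*) [Fintype Y] [Nonempty Y] [MeasurableSpace Y] [MeasurableSingletonClass Y]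
    (h : EuclideanSpace ℝ (Fin d) → Y) (hh : Measurable h) (σ : ℝ) (hσ : 0 < σ)
    (w w' : EuclideanSpace ℝ (Fin d)) (cA : Y) (pA pB : ℝ)
    (hpA : pA ∈ Set.Icc (0 : ℝ) 1) (hpB : pB ∈ Set.Icc (0 : ℝ) 1) (hBA : pB ≤ pA)
    (hA : ENNReal.ofReal pA ≤ gaussianPi w' σ {u | h u = cA})
    (hB : ∀ c, c ≠ cA → gaussianPi w' σ {u | h u = c} ≤ ENNReal.ofReal pB)
    (hrad : ‖w - w'‖ ^ 2 ≤ -2 * σ ^ 2 * Real.log (1 - (Real.sqrt pA - Real.sqrt pB) ^ 2)) :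
    ∀ c, c ≠ cA → gaussianPi w σ {u | h u = c} ≤ gaussianPi w σ {u | h u = cA} := by
  intro c hc
  have hmS : ∀ c' : Y, MeasurableSet {u : EuclideanSpace ℝ (Fin d) | h u = c'} :=
    fun c' => hh (measurableSet_singleton c')
  set A : Set (Fin d → ℝ) :=
    (MeasurableEquiv.toLp 2 (Fin d → ℝ)) ⁻¹' {u | h u = cA} with hAdef
  set B : Set (Fin d → ℝ) :=
    (MeasurableEquiv.toLp 2 (Fin d → ℝ)) ⁻¹' {u | h u = c} with hBdef
  have hmA : MeasurableSet A :=
    (MeasurableEquiv.toLp 2 (Fin d → ℝ)).measurable (hmS cA)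
  have hmB : MeasurableSet B :=
    (MeasurableEquiv.toLp 2 (Fin d → ℝ)).measurable (hmS c)
  have hABdisj : Disjoint A B := by
    rw [Set.disjoint_left]
    intro x hxA hxB
    exact hc ((hxB ▸ hxA : (c : Y) = cA))
  rw [Gpi_map w (hmS c), Gpi_map w (hmS cA)]
  rw [Gpi_map w' (hmS cA)] at hA
  have hBc := hB c hc
  rw [Gpi_map w' (hmS c)] at hBc
  have hdens := Gpi_dens hσ w w'
  have hAC : Gpi σ w ≪ Gpi σ w' := by
    rw [hdens]
    exact withDensity_absolutelyContinuous _ _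
  obtain ⟨hK_int, hK⟩ := Gpi_int hσ w w'
  have hnorm : ‖w - w'‖^2 = ∑ i, (w i - w' i)^2 := by
    rw [EuclideanSpace.norm_eq, Real.sq_sqrt (Finset.sum_nonneg fun i _ => sq_nonneg _)]
    refine Finset.sum_congr rfl fun i _ => ?_
    rw [Real.norm_eq_abs, sq_abs]
    simp [PiLp.sub_apply]
  set a := ((Gpi σ w') A).toReal with ha
  set b := ((Gpi σ w') B).toReal with hb
  set xv := ((Gpi σ w) A).toReal with hxv
  set yv := ((Gpi σ w) B).toReal with hyv
  have haA : pA ≤ a := by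
    have := ENNReal.toReal_mono (measure_ne_top _ _) hA
    rwa [ENNReal.toReal_ofReal hpA.1] at this
  have hbB : b ≤ pB := by
    have := ENNReal.toReal_mono ENNReal.ofReal_ne_top hBc
    rwa [ENNReal.toReal_ofReal hpB.1] at this
  by_cases hb0 : (Gpi σ w') B = 0
  · rw [hAC hb0]
    exact zero_le
  have hbpos : 0 < b := ENNReal.toReal_pos hb0 (measure_ne_top _ _)
  have hpBpos : 0 < pB := hbpos.trans_le hbB
  have hpApos : 0 < pA := hpBpos.trans_le hBA
  have hapos : 0 < a := hpApos.trans_le haA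
  by_cases hab' : a ≤ b
  · have h1 : pA = pB := le_antisymm (by linarith) hBA
    have hw : w = w' := by
      have h2 : Real.sqrt pA - Real.sqrt pB = 0 := by rw [h1]; ring
      rw [h2] at hrad
      have h5 : -2*σ^2 * Real.log (1 - (0:ℝ)^2) = 0 := by norm_num
      rw [h5] at hrad
      have h3 : (0:ℝ) ≤ ‖w - w'‖ := norm_nonneg _
      have h4 : ‖w - w'‖ = 0 := by nlinarith
      exact sub_eq_zero.mp (norm_eq_zero.mp h4)
    rw [hw]
    calc (Gpi σ w') B ≤ ENNReal.ofReal pB := hBc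
      _ ≤ ENNReal.ofReal pA := ENNReal.ofReal_le_ofReal hBA
      _ ≤ (Gpi σ w') A := hA
  push_neg at hab'
  have hsa : 0 < Real.sqrt a := Real.sqrt_pos.mpr hapos
  have hsb : 0 < Real.sqrt b := Real.sqrt_pos.mpr hbpos
  set cc := ((Gpi σ w') (A ∪ B)ᶜ).toReal with hccdef
  set zz := ((Gpi σ w) (A ∪ B)ᶜ).toReal with hzzdef
  have hcompl : ∀ (m : Measure (Fin d → ℝ)), IsProbabilityMeasure m →
      (m (A ∪ B)ᶜ).toReal = 1 - (m A).toReal - (m B).toReal := by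
    intro m hm
    have hu : m (A ∪ B) = m A + m B := measure_union hABdisj hmB
    have hle1 : m A + m B ≤ 1 := by rw [← hu]; exact prob_le_one
    rw [measure_compl (hmA.union hmB) (measure_ne_top _ _), measure_univ, hu,
      ENNReal.toReal_sub_of_le hle1 ENNReal.one_ne_top, ENNReal.toReal_one,
      ENNReal.toReal_add (measure_ne_top _ _) (measure_ne_top _ _)]
    ring
  have hcc : cc = 1 - a - b := hcompl (Gpi σ w') inferInstance
  have hzz : zz = 1 - xv - yv := hcompl (Gpi σ w) inferInstance
  have hccnn : 0 ≤ cc := ENNReal.toReal_nonneg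
  set k := cc + 2*(Real.sqrt a * Real.sqrt b) with hkdef
  have hkpos : 0 < k := by
    have := mul_pos hsa hsb
    rw [hkdef]
    linarith
  set tt := 1 - (Real.sqrt pA - Real.sqrt pB)^2 with httdef
  have httpos : 0 < tt := by
    have h1 : Real.sqrt pA ≤ 1 := Real.sqrt_le_one.mpr hpA.2
    have h2 : 0 < Real.sqrt pB := Real.sqrt_pos.mpr hpBpos
    have h3 : 0 ≤ Real.sqrt pA - Real.sqrt pB :=
      sub_nonneg.mpr (Real.sqrt_le_sqrt hBA)
    have h4 : Real.sqrt pA - Real.sqrt pB < 1 := by linarith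
    have := pow_lt_one₀ h3 h4 (two_ne_zero)
    rw [httdef]
    linarith
  have hK_le : ∫ x, ℓpi σ w w' x ∂(Gpi σ w) ≤ -Real.log tt := by
    rw [hK, div_le_iff₀ (by positivity), ← hnorm]
    calc ‖w - w'‖^2 ≤ -2 * σ^2 * Real.log tt := hrad
      _ = -Real.log tt * (2*σ^2) := by ring
  have hk_le_tt : k ≤ tt := by
    have ha' : Real.sqrt a ^ 2 = a := Real.sq_sqrt hapos.le
    have hb' : Real.sqrt b ^ 2 = b := Real.sq_sqrt hbpos.le
    have hsq : k = 1 - (Real.sqrt a - Real.sqrt b)^2 := by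
      have hx : (Real.sqrt a - Real.sqrt b)^2
          = a + b - 2*(Real.sqrt a * Real.sqrt b) := by
        rw [sub_sq, ha', hb']; ring
      rw [hkdef, hcc, hx]; ring
    have hmono : (Real.sqrt pA - Real.sqrt pB)^2 ≤ (Real.sqrt a - Real.sqrt b)^2 := by
      have h1 : 0 ≤ Real.sqrt pA - Real.sqrt pB := sub_nonneg.mpr (Real.sqrt_le_sqrt hBA)
      have h2 : Real.sqrt pA - Real.sqrt pB ≤ Real.sqrt a - Real.sqrt b := by
        have hA1 := Real.sqrt_le_sqrt haA
        have hB1 := Real.sqrt_le_sqrt hbB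
        linarith
      exact pow_le_pow_left₀ h1 h2 2
    rw [hsq, httdef]
    linarith
  set α := Real.sqrt b / (Real.sqrt a * k) with hαdef
  set β := Real.sqrt a / (Real.sqrt b * k) with hβdef
  set γ := 1 / k with hγdef
  have hαpos : 0 < α := div_pos hsb (mul_pos hsa hkpos)
  have hβpos : 0 < β := div_pos hsa (mul_pos hsb hkpos)
  have hγpos : 0 < γ := div_pos one_pos hkpos
  have hks : k ≠ 0 := hkpos.ne'
  have e1 : α * a * k = Real.sqrt a * Real.sqrt b := by
    rw [hαdef, div_mul_eq_mul_div, div_mul_eq_mul_div, div_eq_iff (mul_ne_zero hsa.ne' hks)]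
    linear_combination (-(Real.sqrt b * k)) * Real.sq_sqrt hapos.le
  have e2 : β * b * k = Real.sqrt a * Real.sqrt b := by
    rw [hβdef, div_mul_eq_mul_div, div_mul_eq_mul_div, div_eq_iff (mul_ne_zero hsb.ne' hks)]
    linear_combination (-(Real.sqrt a * k)) * Real.sq_sqrt hbpos.le
  have e3 : γ * cc * k = cc := by
    rw [hγdef]; field_simp
  have hsum : α * a + β * b + γ * cc = 1 := by
    have h1 : (α * a + β * b + γ * cc) * k
        = Real.sqrt a * Real.sqrt b + Real.sqrt a * Real.sqrt b + cc := by
      rw [add_mul, add_mul, e1, e2, e3]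
    have h2 : Real.sqrt a * Real.sqrt b + Real.sqrt a * Real.sqrt b + cc = k := by
      rw [hkdef]; ring
    have h3 : (α * a + β * b + γ * cc) * k = 1 * k := by rw [h1, h2, one_mul]
    exact mul_right_cancel₀ hks h3
  have hGb := gibbs_bound (Gpi σ w') (ℓpi σ w w') (ℓpi_meas σ w w') (Gpi σ w) hdens hK_int
    A B hmA hmB hABdisj α β γ hαpos hβpos hγpos hsum
  have hchain : ∫ x, ℓpi σ w w' x ∂(Gpi σ w) ≤ -Real.log k :=
    hK_le.trans (neg_le_neg (Real.log_le_log hkpos hk_le_tt))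
  have hlogα : Real.log α = Real.log b / 2 - Real.log a / 2 - Real.log k := by
    rw [hαdef, Real.log_div hsb.ne' (mul_ne_zero hsa.ne' hks), Real.log_mul hsa.ne' hks,
      Real.log_sqrt hbpos.le, Real.log_sqrt hapos.le]
    ring
  have hlogβ : Real.log β = Real.log a / 2 - Real.log b / 2 - Real.log k := by
    rw [hβdef, Real.log_div hsa.ne' (mul_ne_zero hsb.ne' hks), Real.log_mul hsb.ne' hks,
      Real.log_sqrt hapos.le, Real.log_sqrt hbpos.le]
    ring
  have hlogγ : Real.log γ = -Real.log k := by
    rw [hγdef, one_div, Real.log_inv]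
  have hineq := hGb.trans hchain
  rw [hlogα, hlogβ, hlogγ, ← hxv, ← hyv, ← hzzdef, hzz] at hineq
  have hkey : (yv - xv) * (Real.log a - Real.log b) ≤ 0 := by linarith
  have hlab : 0 < Real.log a - Real.log b := sub_pos.mpr (Real.log_lt_log hbpos hab')
  have hyx : yv ≤ xv := by
    by_contra hlt
    push_neg at hlt
    exact absurd hkey (not_le.mpr (mul_pos (sub_pos.mpr hlt) hlab))
  exact (ENNReal.toReal_le_toReal (measure_ne_top _ _) (measure_ne_top _ _)).mp hyx
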